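/- Let F̄ : ℝ → (0, 1] be nonincreasing with F̄(x) = 1 for all x ≤ 0, and suppose F̄ is log-concave on [0, ∞). Then for every integer u ≥ 2, all real numbers t_1 ≤ t_2 ≤ … ≤ t_u, and every x ≥ 0, Π_{i=1}^{u} F̄(x/u + t_u − t_i) ≥ Π_{i=1}^{u−1} F̄(x/(u−1) + t_u − t_i). If instead F̄ is log-convex on [0, ∞), the inequality is reversed. -/

import Mathlib

/-- `f` is log-concave on `D`: `f(θx + (1−θ)y) ≥ f(x)^θ f(y)^{1−θ}`. -/
def LogConcaveOn (D : Set ℝ) (f : ℝ → ℝ) : Prop :=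
  ∀ ⦃x⦄, x ∈ D → ∀ ⦃y⦄, y ∈ D → ∀ ⦃θ : ℝ⦄, θ ∈ Set.Icc (0 : ℝ) 1 →
    f x ^ θ * f y ^ (1 - θ) ≤ f (θ * x + (1 - θ) * y)

/-- `f` is log-convex on `D`: `f(θx + (1−θ)y) ≤ f(x)^θ f(y)^{1−θ}`. -/
def LogConvexOn (D : Set ℝ) (f : ℝ → ℝ) : Prop :=
  ∀ ⦃x⦄, x ∈ D → ∀ ⦃y⦄, y ∈ D → ∀ ⦃θ : ℝ⦄, θ ∈ Set.Icc (0 : ℝ) 1 →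
    f (θ * x + (1 - θ) * y) ≤ f x ^ θ * f y ^ (1 - θ)

lemma pair_lemma (F : ℝ → ℝ) (hpos : ∀ x, 0 < F x)
    (hlc : LogConcaveOn (Set.Ici 0) F) {a b δ : ℝ}
    (hb : 0 ≤ b) (hba : b ≤ a) (hδ : 0 ≤ δ) :
    F (a + δ) * F b ≤ F a * F (b + δ) := by
  rcases eq_or_lt_of_le (show b ≤ a + δ by linarith) with h | h
  · have hδ0 : δ = 0 := by linarith
    have hab : a = b := by linarith
    exact le_of_eq (by rw [hδ0, hab]; ring)
  · set s : ℝ := a + δ - b with hs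
    have hs0 : 0 < s := by simp [hs]; linarith
    set θ : ℝ := δ / s with hθdef
    have hθmem : θ ∈ Set.Icc (0:ℝ) 1 := by
      constructor
      · exact div_nonneg hδ hs0.le
      · rw [div_le_one hs0]; simp [hs]; linarith
    have hθs : θ * s = δ := div_mul_cancel₀ δ hs0.ne'
    have hmem1 : a + δ ∈ Set.Ici (0:ℝ) := by simp; linarith
    have hmem2 : b ∈ Set.Ici (0:ℝ) := hb
    have h1 := hlc hmem1 hmem2 hθmem
    have h2 := hlc hmem1 hmem2 (show 1 - θ ∈ Set.Icc (0:ℝ) 1 by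
      constructor <;> [linarith [hθmem.2]; linarith [hθmem.1]])
    have e1 : θ * (a + δ) + (1 - θ) * b = b + δ := by
      have : θ * (a + δ - b) = δ := hθs
      linarith [this]
    have e2 : (1 - θ) * (a + δ) + (1 - (1 - θ)) * b = a := by
      have : θ * (a + δ - b) = δ := hθs
      nlinarith [this]
    rw [e1] at h1
    rw [e2] at h2
    have h2' : F (a + δ) ^ (1 - θ) * F b ^ θ ≤ F a := by
      have : 1 - (1 - θ) = θ := by ring
      rwa [this] at h2
    have key := mul_le_mul h1 h2' (mul_nonneg (Real.rpow_nonneg (hpos _).le _) (Real.rpow_nonneg (hpos _).le _)) (hpos _).le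
    have lhs_eq : F (a + δ) ^ θ * F b ^ (1 - θ) * (F (a + δ) ^ (1 - θ) * F b ^ θ)
        = F (a + δ) * F b := by
      rw [show F (a + δ) ^ θ * F b ^ (1 - θ) * (F (a + δ) ^ (1 - θ) * F b ^ θ)
          = (F (a + δ) ^ θ * F (a + δ) ^ (1 - θ)) * (F b ^ (1 - θ) * F b ^ θ) from by ring,
        ← Real.rpow_add (hpos _), ← Real.rpow_add (hpos _),
        show θ + (1 - θ) = 1 from by ring, show 1 - θ + θ = 1 from by ring,
        Real.rpow_one, Real.rpow_one]
    rw [lhs_eq] at key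
    linarith [key]

lemma main_concave (F : ℝ → ℝ) (hpos : ∀ x, 0 < F x) (hF0 : F 0 = 1)
    (hlc : LogConcaveOn (Set.Ici 0) F) :
    ∀ v : ℕ, ∀ a : ℕ → ℝ, ∀ δ : ℝ, 0 ≤ δ →
      (∀ i ∈ Finset.Icc 1 v, (v : ℝ) * δ ≤ a i) →
      ∏ i ∈ Finset.Icc 1 v, F (a i + δ)
        ≤ F ((v : ℝ) * δ) * ∏ i ∈ Finset.Icc 1 v, F (a i) := by
  intro v
  induction v with
  | zero => intro a δ hδ _; simp [hF0]
  | succ v ih =>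
    intro a δ hδ hbig
    have hmemtop : v + 1 ∈ Finset.Icc 1 (v + 1) := by simp
    have htop : (v : ℝ) * δ ≤ a (v + 1) := by
      have := hbig (v + 1) hmemtop
      push_cast at this ⊢
      nlinarith
    have h1 : 1 ≤ v + 1 := by omega
    rw [Finset.prod_Icc_succ_top h1, Finset.prod_Icc_succ_top h1]
    have ihh := ih a δ hδ (fun i hi => by
      have hi' : i ∈ Finset.Icc 1 (v + 1) := by
        simp at hi ⊢; omega
      have := hbig i hi'
      push_cast at this ⊢
      nlinarith)
    have hpair := pair_lemma F hpos hlc (a := a (v + 1)) (b := (v : ℝ) * δ)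
      (by positivity) htop hδ
    calc (∏ i ∈ Finset.Icc 1 v, F (a i + δ)) * F (a (v + 1) + δ)
        ≤ (F ((v : ℝ) * δ) * ∏ i ∈ Finset.Icc 1 v, F (a i)) * F (a (v + 1) + δ) := by
          apply mul_le_mul_of_nonneg_right ihh (hpos _).le
      _ = (∏ i ∈ Finset.Icc 1 v, F (a i)) * (F (a (v + 1) + δ) * F ((v : ℝ) * δ)) := by ring
      _ ≤ (∏ i ∈ Finset.Icc 1 v, F (a i)) * (F (a (v + 1)) * F ((v : ℝ) * δ + δ)) := by
          apply mul_le_mul_of_nonneg_left hpair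
          exact Finset.prod_nonneg fun i _ => (hpos _).le
      _ = F (((v + 1 : ℕ) : ℝ) * δ) * ((∏ i ∈ Finset.Icc 1 v, F (a i)) * F (a (v + 1))) := by
          rw [show (((v + 1 : ℕ)) : ℝ) * δ = (v : ℝ) * δ + δ from by push_cast; ring]; ring

/-- For a tail distribution `F̄ : ℝ → (0,1]` (with `F̄ ≡ 1` on `(-∞,0]`), log-concavity on
`[0,∞)` implies, for every `u ≥ 2`, `t_1 ≤ … ≤ t_u` and `x ≥ 0`,
`Π_{i=1}^{u} F̄(x/u + t_u − t_i) ≥ Π_{i=1}^{u−1} F̄(x/(u−1) + t_u − t_i)`;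
log-convexity implies the reverse inequality. -/
theorem prod_tail_shift_ineq (F : ℝ → ℝ)
    (hrange : ∀ x, F x ∈ Set.Ioc (0 : ℝ) 1)
    (hmono : Antitone F) (hneg : ∀ x ≤ (0 : ℝ), F x = 1) :
    (LogConcaveOn (Set.Ici 0) F →
      ∀ u : ℕ, 2 ≤ u → ∀ t : ℕ → ℝ,
        (∀ i j, 1 ≤ i → i ≤ j → j ≤ u → t i ≤ t j) → ∀ x ≥ (0 : ℝ),
        ∏ i ∈ Finset.Icc 1 (u - 1), F (x / (u - 1 : ℝ) + t u - t i)
          ≤ ∏ i ∈ Finset.Icc 1 u, F (x / (u : ℝ) + t u - t i)) ∧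
    (LogConvexOn (Set.Ici 0) F →
      ∀ u : ℕ, 2 ≤ u → ∀ t : ℕ → ℝ,
        (∀ i j, 1 ≤ i → i ≤ j → j ≤ u → t i ≤ t j) → ∀ x ≥ (0 : ℝ),
        ∏ i ∈ Finset.Icc 1 u, F (x / (u : ℝ) + t u - t i)
          ≤ ∏ i ∈ Finset.Icc 1 (u - 1), F (x / (u - 1 : ℝ) + t u - t i)) := by
  have hpos : ∀ x, 0 < F x := fun x => (hrange x).1
  have hF0 : F 0 = 1 := hneg 0 le_rfl
  constructor
  · -- log-concave case
    intro hlc u hu t ht x hx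
    set v := u - 1 with hvdef
    have huv : u = v + 1 := by omega
    have hv1 : 1 ≤ v := by omega
    have hu2 : (2 : ℝ) ≤ (u : ℝ) := by exact_mod_cast hu
    have hupos : (0 : ℝ) < (u : ℝ) := by linarith
    have hvpos : (0 : ℝ) < (u : ℝ) - 1 := by linarith
    have hcastv : ((v : ℕ) : ℝ) = (u : ℝ) - 1 := by
      rw [huv]; push_cast; ring
    set δ : ℝ := x / ((u : ℝ) * ((u : ℝ) - 1)) with hδdef
    have hδ : 0 ≤ δ := by positivity
    set a : ℕ → ℝ := fun i => x / (u : ℝ) + t u - t i with hadef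
    have e1 : ∀ i, a i + δ = x / ((u : ℝ) - 1) + t u - t i := by
      intro i
      simp only [hadef, hδdef]
      field_simp
      ring
    have e2 : ((v : ℕ) : ℝ) * δ = x / (u : ℝ) := by
      rw [hcastv, hδdef]
      field_simp
    have hbig : ∀ i ∈ Finset.Icc 1 v, ((v : ℕ) : ℝ) * δ ≤ a i := by
      intro i hi
      simp only [Finset.mem_Icc] at hi
      rw [e2]
      simp only [hadef]
      have : t i ≤ t u := ht i u hi.1 (by omega) le_rfl
      linarith
    have key := main_concave F hpos hF0 hlc v a δ hδ hbig
    rw [show ∏ i ∈ Finset.Icc 1 v, F (a i + δ)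
        = ∏ i ∈ Finset.Icc 1 v, F (x / ((u : ℝ) - 1) + t u - t i) from
      Finset.prod_congr rfl (fun i _ => by rw [e1])] at key
    have hrhs : ∏ i ∈ Finset.Icc 1 u, F (x / (u : ℝ) + t u - t i)
        = F (((v : ℕ) : ℝ) * δ) * ∏ i ∈ Finset.Icc 1 v, F (a i) := by
      rw [huv, Finset.prod_Icc_succ_top (by omega : 1 ≤ v + 1), ← huv]
      have hlast : x / (u : ℝ) + t u - t u = ((v : ℕ) : ℝ) * δ := by
        rw [← e2]; ring
      rw [hlast, mul_comm]
    rw [hrhs]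
    exact key
  · -- log-convex case
    intro hlv u hu t ht x hx
    set G : ℝ → ℝ := fun y => (F y)⁻¹ with hGdef
    have hGpos : ∀ y, 0 < G y := fun y => inv_pos.mpr (hpos y)
    have hG0 : G 0 = 1 := by simp [hGdef, hF0]
    have hGlc : LogConcaveOn (Set.Ici 0) G := by
      intro p hp q hq θ hθ
      have h := hlv hp hq hθ
      simp only [hGdef]
      rw [Real.inv_rpow (hpos p).le, Real.inv_rpow (hpos q).le, ← mul_inv]
      exact inv_anti₀ (hpos _) h
    set v := u - 1 with hvdef
    have huv : u = v + 1 := by omega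
    have hv1 : 1 ≤ v := by omega
    have hu2 : (2 : ℝ) ≤ (u : ℝ) := by exact_mod_cast hu
    have hupos : (0 : ℝ) < (u : ℝ) := by linarith
    have hvpos : (0 : ℝ) < (u : ℝ) - 1 := by linarith
    have hcastv : ((v : ℕ) : ℝ) = (u : ℝ) - 1 := by
      rw [huv]; push_cast; ring
    set δ : ℝ := x / ((u : ℝ) * ((u : ℝ) - 1)) with hδdef
    have hδ : 0 ≤ δ := by positivity
    set a : ℕ → ℝ := fun i => x / (u : ℝ) + t u - t i with hadef
    have e1 : ∀ i, a i + δ = x / ((u : ℝ) - 1) + t u - t i := by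
      intro i
      simp only [hadef, hδdef]
      field_simp
      ring
    have e2 : ((v : ℕ) : ℝ) * δ = x / (u : ℝ) := by
      rw [hcastv, hδdef]
      field_simp
    have hbig : ∀ i ∈ Finset.Icc 1 v, ((v : ℕ) : ℝ) * δ ≤ a i := by
      intro i hi
      simp only [Finset.mem_Icc] at hi
      rw [e2]
      simp only [hadef]
      have : t i ≤ t u := ht i u hi.1 (by omega) le_rfl
      linarith
    have key := main_concave G hGpos hG0 hGlc v a δ hδ hbig
    simp only [hGdef] at key
    rw [Finset.prod_inv_distrib, Finset.prod_inv_distrib, ← mul_inv] at key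
    have key2 : F (((v : ℕ) : ℝ) * δ) * ∏ i ∈ Finset.Icc 1 v, F (a i)
        ≤ ∏ i ∈ Finset.Icc 1 v, F (a i + δ) := by
      have h1 : (0 : ℝ) < ∏ i ∈ Finset.Icc 1 v, F (a i + δ) :=
        Finset.prod_pos fun i _ => hpos _
      have h2 : (0 : ℝ) < F (((v : ℕ) : ℝ) * δ) * ∏ i ∈ Finset.Icc 1 v, F (a i) :=
        mul_pos (hpos _) (Finset.prod_pos fun i _ => hpos _)
      exact (inv_le_inv₀ h1 h2).mp key
    rw [show ∏ i ∈ Finset.Icc 1 v, F (a i + δ)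
        = ∏ i ∈ Finset.Icc 1 v, F (x / ((u : ℝ) - 1) + t u - t i) from
      Finset.prod_congr rfl (fun i _ => by rw [e1])] at key2
    have hrhs : ∏ i ∈ Finset.Icc 1 u, F (x / (u : ℝ) + t u - t i)
        = F (((v : ℕ) : ℝ) * δ) * ∏ i ∈ Finset.Icc 1 v, F (a i) := by
      rw [huv, Finset.prod_Icc_succ_top (by omega : 1 ≤ v + 1), ← huv]
      have hlast : x / (u : ℝ) + t u - t u = ((v : ℕ) : ℝ) * δ := by
        rw [← e2]; ring
      rw [hlast, mul_comm]
    rw [hrhs]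
    exact key2
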